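/- Let G be a finite simple graph with vertex set V, let 0 < φ ≤ 1/12, and let A ⊆ B ⊆ V be vertex sets satisfying |∂A| ≤ φ·Vol(V∖A), Vol(B) ≤ (1+φ)·Vol(A), Vol(A) ≤ (5/6)·Vol(V), and Vol(B) > Vol(V)/2. Then |∂B| ≤ 12φ·Vol(V∖B); in particular, if B ≠ V then the conductance of the cut B satisfies Φ(B) ≤ 12φ. -/

import Mathlib

open Finset

/-- The volume of a vertex set: the sum of the degrees (in `G`) of its vertices. -/
def gvol {V : Type*} [Fintype V] (G : SimpleGraph V) [DecidableRel G.Adj]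
    (S : Finset V) : ℕ :=
  ∑ v ∈ S, G.degree v

/-- The number of edges of `G` with one endpoint in `S` and the other in `T`
(for disjoint `S`, `T`, counted as ordered pairs `(s, t) ∈ S × T` with `s ~ t`). -/
def gcut {V : Type*} [Fintype V] [DecidableEq V] (G : SimpleGraph V) [DecidableRel G.Adj]
    (S T : Finset V) : ℕ :=
  ((S ×ˢ T).filter fun p => G.Adj p.1 p.2).card

lemma gcut_eq_sum {V : Type*} [Fintype V] [DecidableEq V] (G : SimpleGraph V)
    [DecidableRel G.Adj] (S T : Finset V) :
    gcut G S T = ∑ v ∈ S, (T.filter (G.Adj v)).card := by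
  unfold gcut
  rw [Finset.card_filter, Finset.sum_product]
  exact Finset.sum_congr rfl fun v _ => (Finset.card_filter _ _).symm

lemma gcut_le_gvol {V : Type*} [Fintype V] [DecidableEq V] (G : SimpleGraph V)
    [DecidableRel G.Adj] (S T : Finset V) : gcut G S T ≤ gvol G S := by
  rw [gcut_eq_sum]
  apply Finset.sum_le_sum
  intro v _
  rw [← SimpleGraph.card_neighborFinset_eq_degree, SimpleGraph.neighborFinset_eq_filter]
  exact Finset.card_le_card (Finset.filter_subset_filter _ (Finset.subset_univ T))

lemma gcut_mono_right {V : Type*} [Fintype V] [DecidableEq V] (G : SimpleGraph V)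
    [DecidableRel G.Adj] (S : Finset V) {T T' : Finset V} (h : T ⊆ T') :
    gcut G S T ≤ gcut G S T' :=
  Finset.card_le_card (Finset.filter_subset_filter _ (Finset.product_subset_product_right h))

lemma gvol_add_compl {V : Type*} [Fintype V] [DecidableEq V] (G : SimpleGraph V)
    [DecidableRel G.Adj] (S : Finset V) :
    gvol G S + gvol G Sᶜ = gvol G Finset.univ :=
  Finset.sum_add_sum_compl S _

lemma gcut_key {V : Type*} [Fintype V] [DecidableEq V] (G : SimpleGraph V)
    [DecidableRel G.Adj] {A B : Finset V} (hAB : A ⊆ B) :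
    gcut G B Bᶜ ≤ gcut G A Aᶜ + gvol G (B \ A) := by
  have hsplit : B = A ∪ (B \ A) := by
    rw [Finset.union_sdiff_self_eq_union, Finset.union_eq_right.2 hAB]
  calc gcut G B Bᶜ = ((((A ∪ (B \ A)) ×ˢ Bᶜ)).filter fun p => G.Adj p.1 p.2).card := by
        rw [gcut]; rw [← hsplit]
    _ ≤ (((A ×ˢ Bᶜ)).filter fun p => G.Adj p.1 p.2).card
        + ((((B \ A) ×ˢ Bᶜ)).filter fun p => G.Adj p.1 p.2).card := by
        rw [Finset.union_product, Finset.filter_union]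
        exact Finset.card_union_le _ _
    _ ≤ gcut G A Aᶜ + gvol G (B \ A) := by
        gcongr
        · exact gcut_mono_right G A (Finset.compl_subset_compl.2 hAB)
        · exact gcut_le_gvol G _ _

/-- Let `G` be a finite simple graph, `0 < φ ≤ 1/12`, and `A ⊆ B` vertex sets
with `|∂A| ≤ φ·Vol(V∖A)`, `Vol(B) ≤ (1+φ)·Vol(A)`, `Vol(A) ≤ (5/6)·Vol(V)`, and
`Vol(B) > Vol(V)/2`. Then `|∂B| ≤ 12φ·Vol(V∖B)`; in particular, if `B ≠ V` then the
conductance `Φ(B) = |∂B| / min(Vol B, Vol Bᶜ)` satisfies `Φ(B) ≤ 12φ`. -/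
theorem boundary_of_slightly_larger_set_large_side
    {V : Type*} [Fintype V] [DecidableEq V] (G : SimpleGraph V) [DecidableRel G.Adj]
    (φ : ℝ) (hφ : 0 < φ) (hφ' : φ ≤ 1 / 12) (A B : Finset V) (hAB : A ⊆ B)
    (hbA : (gcut G A Aᶜ : ℝ) ≤ φ * gvol G Aᶜ)
    (hvolB : (gvol G B : ℝ) ≤ (1 + φ) * gvol G A)
    (hvolA : (gvol G A : ℝ) ≤ (5 / 6) * gvol G Finset.univ)
    (hhalf : (gvol G Finset.univ : ℝ) / 2 < (gvol G B : ℝ)) :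
    (gcut G B Bᶜ : ℝ) ≤ 12 * φ * gvol G Bᶜ ∧
    (B ≠ Finset.univ →
      (gcut G B Bᶜ : ℝ) / min (gvol G B : ℝ) (gvol G Bᶜ : ℝ) ≤ 12 * φ) := by
  have hA : (gvol G A : ℝ) + gvol G Aᶜ = gvol G Finset.univ := by
    exact_mod_cast congrArg (Nat.cast (R := ℝ)) (gvol_add_compl G A)
  have hB : (gvol G B : ℝ) + gvol G Bᶜ = gvol G Finset.univ := by
    exact_mod_cast congrArg (Nat.cast (R := ℝ)) (gvol_add_compl G B)
  have hdiff : (gvol G (B \ A) : ℝ) = gvol G B - gvol G A := by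
    have : gvol G (B \ A) + gvol G A = gvol G B := Finset.sum_sdiff hAB
    have := congrArg (Nat.cast (R := ℝ)) this
    push_cast at this
    linarith
  have hkey : (gcut G B Bᶜ : ℝ) ≤ gcut G A Aᶜ + gvol G (B \ A) := by
    exact_mod_cast gcut_key G hAB
  have h1 : (gcut G B Bᶜ : ℝ) ≤ 12 * φ * gvol G Bᶜ := by
    -- cut ≤ φ vol Aᶜ + φ vol A = φ vol V, and 12 vol Bᶜ ≥ vol V
    nlinarith [hkey, hbA, hdiff, hA, hB, hvolB, hvolA, hφ, hφ']
  refine ⟨h1, fun _ => ?_⟩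
  have hBc_lt : (gvol G Bᶜ : ℝ) < gvol G B := by linarith
  rw [min_eq_right hBc_lt.le]
  rcases eq_or_lt_of_le (by positivity : (0:ℝ) ≤ (gvol G Bᶜ : ℝ)) with h0 | h0
  · have : (gcut G B Bᶜ : ℝ) = 0 := le_antisymm (by nlinarith) (by positivity)
    rw [this, ← h0, div_zero]
    positivity
  · rw [div_le_iff₀ h0]
    linarith [h1]
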